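/- Let 3 ≤ r ≤ n, let C^1, ..., C^{m-1} be pairwise disjoint skipless chains in 2^[n], each starting in layer r-2 and ending in layer r. Let B ⊆ [n] with |B| = r and let A ⊆ B with |A| ≤ r - 2, with A, B not in any C^i. Then there exist m pairwise disjoint chains D^1, ..., D^m such that: for i ≤ m-1, D^i is skipless, starts in layer r-2 and ends in layer r; D^m starts at A and contains a set of size r-1 and a set of size r; and the union of the D^i covers the union of the C^i together with A and B. -/

import Mathlib

/-- A family of finsets that is a chain under inclusion. -/
def IsChainF (C : Finset (Finset ℕ)) : Prop :=
  ∀ A ∈ C, ∀ B ∈ C, A ⊆ B ∨ B ⊆ A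

/-- A skipless chain: a chain in which every cardinality between those of two
members is attained by some member. -/
def SkiplessChain (C : Finset (Finset ℕ)) : Prop :=
  IsChainF C ∧ ∀ A ∈ C, ∀ B ∈ C, ∀ k : ℕ, A.card ≤ k → k ≤ B.card → ∃ D ∈ C, D.card = k

/-- The maximum size of a matching between a family `𝒜` and its shadow in the
containment bipartite graph. -/
noncomputable def nu (𝒜 : Finset (Finset ℕ)) : ℕ :=
  sSup {m | ∃ s ⊆ 𝒜, s.card = m ∧ ∃ f : Finset ℕ → Finset ℕ,
    Set.InjOn f ↑s ∧ ∀ a ∈ s, f a ∈ Finset.shadow 𝒜 ∧ f a ⊆ a}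

/-- The initial segment of the colexicographic order on `t`-element subsets of ℕ
of size `m`. -/
def colexSeg (m t : ℕ) : Finset (Finset ℕ) :=
  ((Finset.range (t + m)).powerset).filter (fun S => S.card = t ∧
    (((Finset.range (t + m)).powerset).filter
      (fun B => B.card = t ∧ toColex B < toColex S)).card < m)

/-- `F` is a `k`-antichain saturated family of subsets of `[n] = {0, …, n-1}`. -/
def AntichainSat (n k : ℕ) (F : Finset (Finset ℕ)) : Prop :=
  (∀ X ∈ F, X ⊆ Finset.range n) ∧
  (¬ ∃ 𝒜 ⊆ F, 𝒜.card = k ∧ IsAntichain (· ⊆ ·) (𝒜 : Set (Finset ℕ))) ∧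
  (∀ X : Finset ℕ, X ⊆ Finset.range n → X ∉ F →
    ∃ 𝒜 ⊆ insert X F, 𝒜.card = k ∧ IsAntichain (· ⊆ ·) (𝒜 : Set (Finset ℕ)))

/-- The antichain saturation number `sat*(n, k)`. -/
noncomputable def satStar (n k : ℕ) : ℕ :=
  sInf {m | ∃ F : Finset (Finset ℕ), AntichainSat n k F ∧ F.card = m}

noncomputable def cAux (k ℓ : ℕ) : ℕ → ℕ
  | 0 => k - 1
  | d + 1 => nu (colexSeg (cAux k ℓ d) (ℓ / 2 - d))

/-- The sequence `c_t` from the paper: `c_t = k - 1` for `t ≥ ⌊ℓ/2⌋` and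
`c_t = ν(C(c_{t+1}, t+1))` for `t < ⌊ℓ/2⌋`. -/
noncomputable def cseq (k ℓ t : ℕ) : ℕ :=
  if ℓ / 2 ≤ t then k - 1 else cAux k ℓ (ℓ / 2 - t)

namespace Stmt8Aux


variable (M T : ℕ → Finset ℕ) (Base : Finset ℕ) (m : ℕ)

/-- head-top of a path list (`Base` for the empty path). -/
def pTop : List ℕ → Finset ℕ
  | [] => Base
  | i :: _ => T i

variable (R : Finset ℕ → Finset ℕ → Prop)

/-- validity of a path: each node relates to the top of the rest. -/
def wOK : List ℕ → Prop
  | [] => True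
  | i :: l => i < m ∧ R (M i) (pTop T Base l) ∧ wOK l

lemma pTop_append (u v : List ℕ) :
    pTop T Base (u ++ v) = pTop T (pTop T Base v) u := by
  cases u <;> simp [pTop]

lemma wOK_append (u v : List ℕ) :
    wOK M T Base m R (u ++ v) ↔ wOK M T (pTop T Base v) m R u ∧ wOK M T Base m R v := by
  induction u with
  | nil => simp [wOK]
  | cons i u ih =>
      show (i < m ∧ R (M i) (pTop T Base (u ++ v)) ∧ wOK M T Base m R (u ++ v)) ↔ _
      rw [pTop_append, ih]
      show _ ↔ (i < m ∧ R (M i) (pTop T (pTop T Base v) u) ∧ wOK M T (pTop T Base v) m R u) ∧ _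
      tauto

lemma wOK_nodup_aux : ∀ (N : ℕ) (l : List ℕ), l.length ≤ N → wOK M T Base m R l →
    ∃ l', wOK M T Base m R l' ∧ pTop T Base l' = pTop T Base l ∧ l'.Nodup := by
  intro N
  induction N with
  | zero =>
      intro l hl h
      have : l = [] := List.length_eq_zero_iff.1 (Nat.le_zero.1 hl)
      exact ⟨l, h, rfl, by simp [this]⟩
  | succ N ih =>
      intro l hl h
      by_cases hn : l.Nodup
      · exact ⟨l, h, rfl, hn⟩
      · have hsplit : ∃ (s t w : List ℕ) (i : ℕ), l = s ++ i :: t ++ i :: w := by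
          clear h hl
          induction l with
          | nil => simp at hn
          | cons a l ihl =>
              by_cases ha : a ∈ l
              · obtain ⟨t, w, rfl⟩ := List.append_of_mem ha
                exact ⟨[], t, w, a, by simp⟩
              · have : ¬ l.Nodup := fun hd => hn (List.nodup_cons.2 ⟨ha, hd⟩)
                obtain ⟨s, t, w, i, rfl⟩ := ihl this
                exact ⟨a :: s, t, w, i, by simp⟩
        obtain ⟨s, t, w, i, rfl⟩ := hsplit
        have h1 := (wOK_append M T Base m R s (i :: t ++ i :: w)).1 (by simpa using h)
        have h2 : wOK M T Base m R (i :: w) := by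
          have hw : wOK M T Base m R (t ++ i :: w) := h1.2.2.2
          exact ((wOK_append M T Base m R t (i :: w)).1 hw).2
        have h3 : wOK M T Base m R (s ++ i :: w) := by
          refine (wOK_append M T Base m R s (i :: w)).2 ⟨?_, h2⟩
          have he : pTop T Base (i :: w) = pTop T Base (i :: t ++ i :: w) := by simp [pTop]
          rw [he]; exact h1.1
        have h4 : pTop T Base (s ++ i :: w) = pTop T Base (s ++ i :: t ++ i :: w) := by
          cases s <;> simp [pTop]
        have hlen : (s ++ i :: w).length ≤ N := by
          have : (s ++ i :: t ++ i :: w).length ≤ N + 1 := by simpa using hl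
          simp at this ⊢
          omega
        obtain ⟨l', hl', htop, hnd⟩ := ih _ hlen h3
        exact ⟨l', hl', by rw [htop, h4], hnd⟩

lemma wOK_nodup {l : List ℕ} (h : wOK M T Base m R l) :
    ∃ l', wOK M T Base m R l' ∧ pTop T Base l' = pTop T Base l ∧ l'.Nodup :=
  wOK_nodup_aux M T Base m R l.length l le_rfl h

lemma wOK_mem_lt {l : List ℕ} (h : wOK M T Base m R l) : ∀ k ∈ l, k < m := by
  induction l with
  | nil => simp
  | cons i l ih =>
      intro k hk
      rcases List.mem_cons.1 hk with rfl | hk'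
      · exact h.1
      · exact ih h.2.2 k hk'

/-- Top rotation along a nodup valid path. -/
lemma tau_exists (B : Finset ℕ)
    (hMT : ∀ k, k < m → M k ⊆ T k)
    (hTinj : ∀ k k', k < m → k' < m → T k = T k' → k = k')
    (hBT : ∀ k, k < m → T k ≠ B) :
    ∀ l : List ℕ, wOK M T B m (· ⊆ ·) l → l.Nodup →
    ∃ τ : ℕ → Finset ℕ,
      (∀ k, k < m → M k ⊆ τ k) ∧
      (∀ k, k < m → (τ k = B ∨ ∃ h, h < m ∧ τ k = T h)) ∧
      (∀ k, k < m → τ k ≠ pTop T B l) ∧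
      (∀ k k', k < m → k' < m → τ k = τ k' → k = k') ∧
      (∀ Y, (Y = B ∨ ∃ h, h < m ∧ Y = T h) → Y ≠ pTop T B l → ∃ k, k < m ∧ τ k = Y) ∧
      (∀ k, k < m → k ∉ l → τ k = T k) ∧
      (∀ k, k ∈ l → (τ k = B ∨ ∃ h, h ∈ l ∧ τ k = T h)) := by
  intro l
  induction l with
  | nil =>
      intro _ _
      refine ⟨T, fun k hk => hMT k hk, fun k hk => Or.inr ⟨k, hk, rfl⟩,
        fun k hk => hBT k hk, fun k k' hk hk' h => hTinj k k' hk hk' h, ?_, fun k _ _ => rfl,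
        by simp⟩
      rintro Y (rfl | ⟨h, hh, rfl⟩) hY
      · exact absurd rfl hY
      · exact ⟨h, hh, rfl⟩
  | cons i l ih =>
      rintro ⟨him, hMi, hOK⟩ hnd
      have hil : i ∉ l := (List.nodup_cons.1 hnd).1
      have hndl : l.Nodup := (List.nodup_cons.1 hnd).2
      have hmem : ∀ k ∈ l, k < m := wOK_mem_lt M T B m _ hOK
      obtain ⟨τ₀, p1, p2, p3, p4, p5, p6, p7⟩ := ih hOK hndl
      have hptop : pTop T B (i :: l) = T i := rfl
      have hPl : pTop T B l = B ∨ ∃ h, h ∈ l ∧ h < m ∧ pTop T B l = T h := by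
        cases l with
        | nil => exact Or.inl rfl
        | cons a l' => exact Or.inr ⟨a, by simp, hOK.1, rfl⟩
      have hPlne : pTop T B l ≠ T i := by
        rcases hPl with h | ⟨h, hhl, hhm, he⟩
        · rw [h]; exact fun hc => hBT i him hc.symm
        · rw [he]; intro hc
          exact hil (by rwa [hTinj h i hhm him hc] at hhl)
      -- key: old values avoid T i
      have hold : ∀ k, k < m → k ≠ i → τ₀ k ≠ T i := by
        intro k hk hne
        by_cases hkl : k ∈ l
        · rcases p7 k hkl with h | ⟨h, hhl, he⟩
          · rw [h]; exact fun hc => hBT i him hc.symm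
          · rw [he]; intro hc
            exact hil (by rwa [hTinj h i (hmem h hhl) him hc] at hhl)
        · rw [p6 k hk hkl]
          exact fun hc => hne (hTinj k i hk him hc)
      refine ⟨Function.update τ₀ i (pTop T B l), ?_, ?_, ?_, ?_, ?_, ?_, ?_⟩
      · intro k hk
        rcases eq_or_ne k i with rfl | hne
        · simpa [Function.update_self] using hMi
        · simpa [Function.update_of_ne hne] using p1 k hk
      · intro k hk
        rcases eq_or_ne k i with rfl | hne
        · rw [Function.update_self]
          rcases hPl with h | ⟨h, _, hhm, he⟩
          · exact Or.inl h
          · exact Or.inr ⟨h, hhm, he⟩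
        · rw [Function.update_of_ne hne]; exact p2 k hk
      · intro k hk
        rw [hptop]
        rcases eq_or_ne k i with rfl | hne
        · rw [Function.update_self]; exact hPlne
        · rw [Function.update_of_ne hne]; exact hold k hk hne
      · intro k k' hk hk' he
        rcases eq_or_ne k i with rfl | hne
        · rcases eq_or_ne k' k with h' | hne'
          · exact h'.symm
          · rw [Function.update_self, Function.update_of_ne hne'] at he
            exfalso; exact p3 k' hk' he.symm
        · rcases eq_or_ne k' i with rfl | hne'
          · rw [Function.update_of_ne hne, Function.update_self] at he
            exfalso; exact p3 k hk he
          · rw [Function.update_of_ne hne, Function.update_of_ne hne'] at he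
            exact p4 k k' hk hk' he
      · intro Y hY hYne
        rw [hptop] at hYne
        rcases eq_or_ne Y (pTop T B l) with rfl | hne
        · exact ⟨i, him, Function.update_self _ _ _⟩
        · obtain ⟨k, hk, hke⟩ := p5 Y hY hne
          have hki : k ≠ i := by
            rintro rfl
            by_cases hkl : k ∈ l
            · exact absurd hkl hil
            · rw [p6 k hk hkl] at hke; exact hYne hke.symm
          exact ⟨k, hk, by rw [Function.update_of_ne hki]; exact hke⟩
      · intro k hk hkl
        have hki : k ≠ i := fun hc => hkl (hc ▸ List.mem_cons_self)
        have hkl' : k ∉ l := fun hc => hkl (List.mem_cons_of_mem _ hc)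
        rw [Function.update_of_ne hki]; exact p6 k hk hkl'
      · intro k hk
        rcases List.mem_cons.1 hk with rfl | hkl
        · rw [Function.update_self]
          rcases hPl with h | ⟨h, hhl, _, he⟩
          · exact Or.inl h
          · exact Or.inr ⟨h, List.mem_cons_of_mem _ hhl, he⟩
        · rcases eq_or_ne k i with rfl | hne
          · rw [Function.update_self]
            rcases hPl with h | ⟨h, hhl, _, he⟩
            · exact Or.inl h
            · exact Or.inr ⟨h, List.mem_cons_of_mem _ hhl, he⟩
          · rw [Function.update_of_ne hne]
            rcases p7 k hkl with h | ⟨h, hhl, he⟩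
            · exact Or.inl h
            · exact Or.inr ⟨h, List.mem_cons_of_mem _ hhl, he⟩

/-- Bottom rotation along a nodup valid bottom-path. -/
lemma beta_exists (L : ℕ → Finset ℕ) (A : Finset ℕ)
    (hLM : ∀ k, k < m → L k ⊆ M k)
    (hLinj : ∀ k k', k < m → k' < m → L k = L k' → k = k')
    (hAL : ∀ k, k < m → L k ≠ A) :
    ∀ (l : List ℕ) (j : ℕ), wOK M L A m (fun x y => y ⊆ x) (j :: l) → (j :: l).Nodup →
    ∃ β : ℕ → Finset ℕ, ∃ jb,
      jb < m ∧ β jb = A ∧ A ⊆ M jb ∧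
      (∀ k, k < m → β k ⊆ M k) ∧
      (∀ k, k < m → k ≠ jb → ∃ h, h < m ∧ β k = L h) ∧
      (∀ k k', k < m → k' < m → β k = β k' → k = k') ∧
      (∀ k, k < m → β k ≠ L j) ∧
      (∀ h, h < m → h ≠ j → ∃ k, k < m ∧ β k = L h) ∧
      (∀ k, k < m → k ∉ j :: l → β k = L k) ∧
      (∀ k, k ∈ j :: l → (β k = A ∨ ∃ h, h ∈ j :: l ∧ β k = L h)) := by
  intro l
  induction l with
  | nil =>
      intro j hOK hnd
      obtain ⟨hjm, hAj, -⟩ := hOK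
      have hAj' : A ⊆ M j := hAj
      refine ⟨Function.update L j A, j, hjm, Function.update_self _ _ _, hAj', ?_, ?_, ?_, ?_, ?_, ?_, ?_⟩
      · intro k hk
        rcases eq_or_ne k j with rfl | hne
        · rw [Function.update_self]; exact hAj'
        · rw [Function.update_of_ne hne]; exact hLM k hk
      · intro k hk hne
        rw [Function.update_of_ne hne]; exact ⟨k, hk, rfl⟩
      · intro k k' hk hk' he
        rcases eq_or_ne k j with rfl | hne
        · rcases eq_or_ne k' k with h' | hne'
          · exact h'.symm
          · rw [Function.update_self, Function.update_of_ne hne'] at he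
            exact absurd he.symm (hAL k' hk')
        · rcases eq_or_ne k' j with rfl | hne'
          · rw [Function.update_of_ne hne, Function.update_self] at he
            exact absurd he (hAL k hk)
          · rw [Function.update_of_ne hne, Function.update_of_ne hne'] at he
            exact hLinj k k' hk hk' he
      · intro k hk
        rcases eq_or_ne k j with rfl | hne
        · rw [Function.update_self]; exact fun hc => hAL k hk hc.symm
        · rw [Function.update_of_ne hne]
          exact fun hc => hne (hLinj k j hk hjm hc)
      · intro h hh hne
        exact ⟨h, hh, by rw [Function.update_of_ne hne]⟩
      · intro k hk hkl
        have : k ≠ j := by simpa using hkl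
        rw [Function.update_of_ne this]
      · intro k hk
        have : k = j := by simpa using hk
        subst this
        exact Or.inl (Function.update_self _ _ _)
  | cons j' l' ih =>
      intro j hOK hnd
      obtain ⟨hjm, hsub, hOK'⟩ := hOK
      have hsub' : L j' ⊆ M j := hsub
      have hjl : j ∉ j' :: l' := (List.nodup_cons.1 hnd).1
      have hnd' : (j' :: l').Nodup := (List.nodup_cons.1 hnd).2
      have hmem : ∀ k ∈ j' :: l', k < m := wOK_mem_lt M L A m _ hOK'
      obtain ⟨β₀, jb, q0, q1, q2, q3, q4, q5, q6, q7, q8, q9⟩ := ih j' hOK' hnd'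
      have hjj' : j ≠ j' := by intro hc; exact hjl (hc ▸ List.mem_cons_self)
      have hβ₀j : β₀ j = L j := q8 j hjm hjl
      have hjbj : jb ≠ j := by
        intro hc; subst hc
        rw [hβ₀j] at q1
        exact hAL jb q0 q1
      refine ⟨Function.update β₀ j (L j'), jb, q0, ?_, q2, ?_, ?_, ?_, ?_, ?_, ?_, ?_⟩
      · rw [Function.update_of_ne hjbj]; exact q1
      · intro k hk
        rcases eq_or_ne k j with rfl | hne
        · rw [Function.update_self]; exact hsub'
        · rw [Function.update_of_ne hne]; exact q3 k hk
      · intro k hk hne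
        rcases eq_or_ne k j with rfl | hne'
        · rw [Function.update_self]; exact ⟨j', hmem j' (List.mem_cons_self), rfl⟩
        · rw [Function.update_of_ne hne']; exact q4 k hk hne
      · intro k k' hk hk' he
        rcases eq_or_ne k j with rfl | hne
        · rcases eq_or_ne k' k with h' | hne'
          · exact h'.symm
          · rw [Function.update_self, Function.update_of_ne hne'] at he
            exact absurd he.symm (q6 k' hk')
        · rcases eq_or_ne k' j with rfl | hne'
          · rw [Function.update_of_ne hne, Function.update_self] at he
            exact absurd he (q6 k hk)
          · rw [Function.update_of_ne hne, Function.update_of_ne hne'] at he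
            exact q5 k k' hk hk' he
      · -- β k ≠ L j
        intro k hk
        rcases eq_or_ne k j with rfl | hne
        · rw [Function.update_self]
          exact fun hc => hjj' (hLinj j' k (hmem j' (List.mem_cons_self)) hk hc).symm
        · rw [Function.update_of_ne hne]
          by_cases hkl : k ∈ j' :: l'
          · rcases q9 k hkl with h | ⟨h, hhl, he⟩
            · rw [h]; exact fun hc => hAL j hjm hc.symm
            · rw [he]; intro hc
              have : h = j := hLinj h j (hmem h hhl) hjm hc
              exact hjl (this ▸ hhl)
          · rw [q8 k hk hkl]
            exact fun hc => hne (hLinj k j hk hjm hc)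
      · -- coverage
        intro h hh hne
        rcases eq_or_ne h j' with rfl | hne'
        · exact ⟨j, hjm, Function.update_self _ _ _⟩
        · obtain ⟨k, hk, hke⟩ := q7 h hh hne'
          have hkj : k ≠ j := by
            rintro rfl
            rw [hβ₀j] at hke
            exact hne (hLinj _ h hjm hh hke).symm
          exact ⟨k, hk, by rw [Function.update_of_ne hkj]; exact hke⟩
      · intro k hk hkl
        have h1 : k ≠ j := fun hc => hkl (hc ▸ List.mem_cons_self)
        have h2 : k ∉ j' :: l' := fun hc => hkl (List.mem_cons_of_mem _ hc)
        rw [Function.update_of_ne h1]; exact q8 k hk h2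
      · intro k hk
        rcases eq_or_ne k j with rfl | hne
        · rw [Function.update_self]
          exact Or.inr ⟨j', List.mem_cons_of_mem _ (List.mem_cons_self), rfl⟩
        · have hkl : k ∈ j' :: l' := by
            rcases List.mem_cons.1 hk with rfl | h
            · exact absurd rfl hne
            · exact h
          rw [Function.update_of_ne hne]
          rcases q9 k hkl with h | ⟨h, hhl, he⟩
          · exact Or.inl h
          · exact Or.inr ⟨h, List.mem_cons_of_mem _ hhl, he⟩


def topOK (M T : ℕ → Finset ℕ) (B : Finset ℕ) (mm : ℕ) (l : List ℕ) : Prop :=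
  wOK M T B mm (· ⊆ ·) l

def botOK (M L : ℕ → Finset ℕ) (A : Finset ℕ) (mm : ℕ) (l : List ℕ) : Prop :=
  wOK M L A mm (fun x y => y ⊆ x) l

/-- The key counting lemma: an escape always exists. -/
lemma escape_exists (L M T : ℕ → Finset ℕ) (A B : Finset ℕ) (r mm : ℕ)
    (hr : 3 ≤ r)
    (hLc : ∀ i, i < mm → (L i).card = r - 2)
    (hMc : ∀ i, i < mm → (M i).card = r - 1)
    (hTc : ∀ i, i < mm → (T i).card = r)
    (hLM : ∀ i, i < mm → L i ⊆ M i)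
    (hMT : ∀ i, i < mm → M i ⊆ T i)
    (hLinj : ∀ k k', k < mm → k' < mm → L k = L k' → k = k')
    (hMinj : ∀ k k', k < mm → k' < mm → M k = M k' → k = k')
    (hTinj : ∀ k k', k < mm → k' < mm → T k = T k' → k = k')
    (hAL : ∀ i, i < mm → L i ≠ A)
    (hBT : ∀ i, i < mm → T i ≠ B)
    (hBcard : B.card = r) (hAB : A ⊆ B) (hAcard : A.card ≤ r - 2) :
    ∃ μ : Finset ℕ, μ.card = r - 1 ∧ (∀ i, i < mm → μ ≠ M i) ∧
      (∃ l, topOK M T B mm l ∧ μ ⊆ pTop T B l) ∧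
      (A ⊆ μ ∨ ∃ j lb, botOK M L A mm (j :: lb) ∧ L j ⊆ μ) := by
  classical
  by_contra hstuck
  have Hst : ∀ μ : Finset ℕ, μ.card = r - 1 →
      (∃ l, topOK M T B mm l ∧ μ ⊆ pTop T B l) →
      (A ⊆ μ ∨ ∃ j lb, botOK M L A mm (j :: lb) ∧ L j ⊆ μ) →
      ∃ i, i < mm ∧ μ = M i := by
    intro μ h1 h2 h3
    by_contra hno
    push_neg at hno
    exact hstuck ⟨μ, h1, fun i hi => hno i hi, h2, h3⟩
  set S : Finset ℕ := (Finset.range mm).filter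
    (fun i => (∃ lb, botOK M L A mm (i :: lb)) ∧
      (∃ l, topOK M T B mm l ∧ T i = pTop T B l)) with hS
  have hSlt : ∀ i ∈ S, i < mm := fun i hi => Finset.mem_range.1 (Finset.mem_filter.1 hi).1
  -- closure property
  have Hmem : ∀ (μ X : Finset ℕ), μ.card = r - 1 →
      (∃ l, topOK M T B mm l ∧ X = pTop T B l) → μ ⊆ X →
      (A ⊆ μ ∨ ∃ j lb, botOK M L A mm (j :: lb) ∧ L j ⊆ μ) →
      ∃ h, h ∈ S ∧ M h = μ := by
    intro μ X h1 h2 h3 h4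
    obtain ⟨l, hl, hX⟩ := h2
    obtain ⟨i, hi, rfl⟩ := Hst μ h1 ⟨l, hl, hX ▸ h3⟩ h4
    refine ⟨i, Finset.mem_filter.2 ⟨Finset.mem_range.2 hi, ?_, ?_⟩, rfl⟩
    · rcases h4 with h | ⟨j, lb, hb, hLj⟩
      · exact ⟨[], hi, h, trivial⟩
      · exact ⟨j :: lb, hi, hLj, hb⟩
    · exact ⟨i :: l, ⟨hi, hX ▸ h3, hl⟩, rfl⟩
  set TT : Finset (Finset ℕ) := insert B (S.image T) with hTT
  have hreachTT : ∀ X ∈ TT, ∃ l, topOK M T B mm l ∧ X = pTop T B l := by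
    intro X hX
    rcases Finset.mem_insert.1 hX with rfl | hX'
    · exact ⟨[], trivial, rfl⟩
    · obtain ⟨h, hh, rfl⟩ := Finset.mem_image.1 hX'
      exact (Finset.mem_filter.1 hh).2.2
  have hcardTT : ∀ X ∈ TT, X.card = r := by
    intro X hX
    rcases Finset.mem_insert.1 hX with rfl | hX'
    · exact hBcard
    · obtain ⟨h, hh, rfl⟩ := Finset.mem_image.1 hX'
      exact hTc h (hSlt h hh)
  -- counting quantities
  set f : Finset ℕ → ℕ := fun X => (S.filter (fun i => M i ⊆ X)).card with hf
  set g : ℕ → ℕ := fun i => (TT.filter (fun X => M i ⊆ X)).card with hg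
  set gam : ℕ → ℕ := fun h => (S.filter (fun i => L i ⊆ M h)).card with hgam
  set lam : ℕ → ℕ := fun i => (S.filter (fun h => L i ⊆ M h)).card with hlam
  -- C1 : double counting
  have C1 : ∑ X ∈ TT, f X = ∑ i ∈ S, g i := by
    simp only [hf, hg, Finset.card_filter]
    exact Finset.sum_comm
  have C2 : ∑ h ∈ S, gam h = ∑ i ∈ S, lam i := by
    simp only [hgam, hlam, Finset.card_filter]
    exact Finset.sum_comm
  have hSbot : ∀ i ∈ S, ∃ lb, botOK M L A mm (i :: lb) :=
    fun i hi => (Finset.mem_filter.1 hi).2.1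
  have hSreach : ∀ i ∈ S, ∃ l, topOK M T B mm l ∧ T i = pTop T B l :=
    fun i hi => (Finset.mem_filter.1 hi).2.2
  -- C3 : gam h + 1 ≤ f (T h) for h ∈ S
  have C3 : ∀ h ∈ S, gam h + 1 ≤ f (T h) := by
    intro h hh
    have hhm : h < mm := hSlt h hh
    set src := S.filter (fun i => L i ⊆ M h) with hsrc
    set tgt := (S.filter (fun i => M i ⊆ T h)).erase h with htgt
    have H : ∀ i ∈ src, ∃ gg, gg ∈ tgt ∧ M gg = T h \ (M h \ L i) := by
      intro i hi
      have hiS : i ∈ S := (Finset.mem_filter.1 hi).1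
      have him : i < mm := hSlt i hiS
      have hLiMh : L i ⊆ M h := (Finset.mem_filter.1 hi).2
      have hD : (M h \ L i).card = 1 := by
        rw [Finset.card_sdiff_of_subset hLiMh, hMc h hhm, hLc i him]; omega
      have hDT : M h \ L i ⊆ T h := (Finset.sdiff_subset).trans (hMT h hhm)
      have hμc : (T h \ (M h \ L i)).card = r - 1 := by
        rw [Finset.card_sdiff_of_subset hDT, hTc h hhm, hD]
      have hμT : T h \ (M h \ L i) ⊆ T h := Finset.sdiff_subset
      have hLμ : L i ⊆ T h \ (M h \ L i) := by
        intro x hx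
        refine Finset.mem_sdiff.2 ⟨(hLiMh.trans (hMT h hhm)) hx, ?_⟩
        exact fun hc => (Finset.mem_sdiff.1 hc).2 hx
      obtain ⟨lb, hlb⟩ := hSbot i hiS
      obtain ⟨gg, hggS, hMgg⟩ := Hmem _ (T h) hμc (hSreach h hh) hμT
        (Or.inr ⟨i, lb, hlb, hLμ⟩)
      have hggm : gg < mm := hSlt gg hggS
      have hgg_ne : gg ≠ h := by
        intro hc; subst hc
        obtain ⟨y, hy⟩ := Finset.card_eq_one.1 hD
        have hyD : y ∈ M gg \ L i := by rw [hy]; exact Finset.mem_singleton_self y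
        have hyM : y ∈ M gg := (Finset.mem_sdiff.1 hyD).1
        have hynot : y ∉ T gg \ (M gg \ L i) := fun hc2 => (Finset.mem_sdiff.1 hc2).2 hyD
        rw [hMgg] at hyM
        exact hynot hyM
      refine ⟨gg, Finset.mem_erase.2 ⟨hgg_ne, Finset.mem_filter.2 ⟨hggS, ?_⟩⟩, hMgg⟩
      rw [hMgg]; exact hμT
    -- build injection
    set φ : ℕ → ℕ := fun i => if hi : i ∈ src then Classical.choose (H i hi) else 0 with hφ
    have hφ1 : ∀ i ∈ src, φ i ∈ tgt := by
      intro i hi; rw [hφ]; simp only [dif_pos hi]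
      exact (Classical.choose_spec (H i hi)).1
    have hφ2 : ∀ i ∈ src, M (φ i) = T h \ (M h \ L i) := by
      intro i hi; rw [hφ]; simp only [dif_pos hi]
      exact (Classical.choose_spec (H i hi)).2
    have hφinj : Set.InjOn φ src := by
      intro i hi i' hi' he
      have h1 := hφ2 i hi
      have h2 := hφ2 i' hi'
      rw [he, h2] at h1
      have hLiMh : L i ⊆ M h := (Finset.mem_filter.1 hi).2
      have hLiMh' : L i' ⊆ M h := (Finset.mem_filter.1 hi').2
      have hDT : M h \ L i ⊆ T h := (Finset.sdiff_subset).trans (hMT h hhm)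
      have hDT' : M h \ L i' ⊆ T h := (Finset.sdiff_subset).trans (hMT h hhm)
      have hDeq : M h \ L i = M h \ L i' := by
        have e1 : M h \ L i = T h \ (T h \ (M h \ L i)) := by
          rw [Finset.sdiff_sdiff_eq_self hDT]
        have e2 : M h \ L i' = T h \ (T h \ (M h \ L i')) := by
          rw [Finset.sdiff_sdiff_eq_self hDT']
        rw [e1, e2, h1]
      have hLeq : L i = L i' := by
        have e1 : L i = M h \ (M h \ L i) := by
          rw [Finset.sdiff_sdiff_eq_self hLiMh]
        have e2 : L i' = M h \ (M h \ L i') := by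
          rw [Finset.sdiff_sdiff_eq_self hLiMh']
        rw [e1, e2, hDeq]
      exact hLinj i i' (hSlt i (Finset.mem_filter.1 hi).1)
        (hSlt i' (Finset.mem_filter.1 hi').1) hLeq
    have hcard : src.card ≤ tgt.card := Finset.card_le_card_of_injOn φ hφ1 hφinj
    have hhmem : h ∈ S.filter (fun i => M i ⊆ T h) :=
      Finset.mem_filter.2 ⟨hh, hMT h hhm⟩
    have htc : tgt.card = f (T h) - 1 := by
      rw [htgt, Finset.card_erase_of_mem hhmem]
    have hsg : gam h = src.card := rfl
    have hpos : 1 ≤ f (T h) := by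
      have : (S.filter (fun i => M i ⊆ T h)).Nonempty := ⟨h, hhmem⟩
      exact Finset.card_pos.2 this
    omega
  -- C4 : g i + 1 ≤ lam i for i ∈ S
  have C4 : ∀ i ∈ S, g i + 1 ≤ lam i := by
    intro i hi
    have him : i < mm := hSlt i hi
    set src := TT.filter (fun X => M i ⊆ X) with hsrc
    set tgt := (S.filter (fun h => L i ⊆ M h)).erase i with htgt
    have H : ∀ X ∈ src, ∃ gg, gg ∈ tgt ∧ M gg = L i ∪ (X \ M i) := by
      intro X hX
      have hXTT : X ∈ TT := (Finset.mem_filter.1 hX).1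
      have hMiX : M i ⊆ X := (Finset.mem_filter.1 hX).2
      have hXc : X.card = r := hcardTT X hXTT
      have hD : (X \ M i).card = 1 := by
        rw [Finset.card_sdiff_of_subset hMiX, hXc, hMc i him]; omega
      have hdisj : Disjoint (L i) (X \ M i) := by
        rw [Finset.disjoint_right]
        intro a ha
        exact fun hc => (Finset.mem_sdiff.1 ha).2 (hLM i him hc)
      have hμc : (L i ∪ (X \ M i)).card = r - 1 := by
        rw [Finset.card_union_of_disjoint hdisj, hLc i him, hD]; omega
      have hμX : L i ∪ (X \ M i) ⊆ X :=
        Finset.union_subset ((hLM i him).trans hMiX) Finset.sdiff_subset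
      obtain ⟨lb, hlb⟩ := hSbot i hi
      obtain ⟨gg, hggS, hMgg⟩ := Hmem _ X hμc (hreachTT X hXTT) hμX
        (Or.inr ⟨i, lb, hlb, Finset.subset_union_left⟩)
      have hgg_ne : gg ≠ i := by
        intro hc; subst hc
        obtain ⟨q, hq⟩ := Finset.card_eq_one.1 hD
        have hqD : q ∈ X \ M gg := by rw [hq]; exact Finset.mem_singleton_self q
        have hqM : q ∈ M gg := by
          rw [hMgg]
          exact Finset.mem_union_right _ hqD
        exact (Finset.mem_sdiff.1 hqD).2 hqM
      refine ⟨gg, Finset.mem_erase.2 ⟨hgg_ne, Finset.mem_filter.2 ⟨hggS, ?_⟩⟩, hMgg⟩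
      rw [hMgg]; exact Finset.subset_union_left
    set φ : Finset ℕ → ℕ := fun X => if hX : X ∈ src then Classical.choose (H X hX) else 0 with hφ
    have hφ1 : ∀ X ∈ src, φ X ∈ tgt := by
      intro X hX; rw [hφ]; simp only [dif_pos hX]
      exact (Classical.choose_spec (H X hX)).1
    have hφ2 : ∀ X ∈ src, M (φ X) = L i ∪ (X \ M i) := by
      intro X hX; rw [hφ]; simp only [dif_pos hX]
      exact (Classical.choose_spec (H X hX)).2
    have hφinj : Set.InjOn φ src := by
      intro X hX X' hX' he
      have h1 := hφ2 X hX
      have h2 := hφ2 X' hX'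
      rw [he, h2] at h1
      have hMiX : M i ⊆ X := (Finset.mem_filter.1 hX).2
      have hMiX' : M i ⊆ X' := (Finset.mem_filter.1 hX').2
      have hdisj : Disjoint (L i) (X \ M i) := by
        rw [Finset.disjoint_right]
        intro a ha
        exact fun hc => (Finset.mem_sdiff.1 ha).2 (hLM i him hc)
      have hdisj' : Disjoint (L i) (X' \ M i) := by
        rw [Finset.disjoint_right]
        intro a ha
        exact fun hc => (Finset.mem_sdiff.1 ha).2 (hLM i him hc)
      have hDeq : X \ M i = X' \ M i := by
        have e1 : X \ M i = (L i ∪ (X \ M i)) \ L i := by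
          rw [Finset.union_sdiff_cancel_left hdisj]
        have e2 : X' \ M i = (L i ∪ (X' \ M i)) \ L i := by
          rw [Finset.union_sdiff_cancel_left hdisj']
        rw [e1, e2, h1]
      have : M i ∪ (X \ M i) = M i ∪ (X' \ M i) := by rw [hDeq]
      rwa [Finset.union_sdiff_of_subset hMiX, Finset.union_sdiff_of_subset hMiX'] at this
    have hcard : src.card ≤ tgt.card := Finset.card_le_card_of_injOn φ hφ1 hφinj
    have himem : i ∈ S.filter (fun h => L i ⊆ M h) :=
      Finset.mem_filter.2 ⟨hi, hLM i him⟩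
    have htc : tgt.card = lam i - 1 := by
      rw [htgt, Finset.card_erase_of_mem himem]
    have hsg : g i = src.card := rfl
    have hpos : 1 ≤ lam i := by
      have : (S.filter (fun h => L i ⊆ M h)).Nonempty := ⟨i, himem⟩
      exact Finset.card_pos.2 this
    omega
  -- C5 : 1 ≤ f B
  have C5 : 1 ≤ f B := by
    have hABlt : A.card < B.card := by rw [hBcard]; omega
    have hBA : (B \ A).Nonempty := by
      rw [← Finset.card_pos, Finset.card_sdiff_of_subset hAB]
      omega
    obtain ⟨x, hx⟩ := hBA
    have hxB : x ∈ B := (Finset.mem_sdiff.1 hx).1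
    have hxA : x ∉ A := (Finset.mem_sdiff.1 hx).2
    have hμc : (B.erase x).card = r - 1 := by
      rw [Finset.card_erase_of_mem hxB, hBcard]
    have hAμ : A ⊆ B.erase x := by
      intro a ha
      exact Finset.mem_erase.2 ⟨fun hc => hxA (hc ▸ ha), hAB ha⟩
    obtain ⟨c, hcS, hMc'⟩ := Hmem (B.erase x) B hμc ⟨[], trivial, rfl⟩
      (Finset.erase_subset x B) (Or.inl hAμ)
    have : c ∈ S.filter (fun i => M i ⊆ B) := by
      refine Finset.mem_filter.2 ⟨hcS, ?_⟩
      rw [hMc']; exact Finset.erase_subset x B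
    exact Finset.card_pos.2 ⟨c, this⟩
  -- C6 : sum splits
  have hBnotim : B ∉ S.image T := by
    intro hc
    obtain ⟨h, hh, he⟩ := Finset.mem_image.1 hc
    exact hBT h (hSlt h hh) he
  have hTinjS : Set.InjOn T S := by
    intro a ha b hb he
    exact hTinj a b (hSlt a ha) (hSlt b hb) he
  have C6 : ∑ X ∈ TT, f X = f B + ∑ h ∈ S, f (T h) := by
    rw [hTT, Finset.sum_insert hBnotim, Finset.sum_image hTinjS]
  -- assemble the contradiction
  have hge : ∑ X ∈ TT, f X ≥ 1 + S.card + ∑ h ∈ S, gam h := by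
    rw [C6]
    have h1 : ∑ h ∈ S, f (T h) ≥ ∑ h ∈ S, (gam h + 1) :=
      Finset.sum_le_sum C3
    rw [Finset.sum_add_distrib] at h1
    simp only [Finset.sum_const, smul_eq_mul, mul_one] at h1
    omega
  have hle : ∑ i ∈ S, g i + S.card ≤ ∑ i ∈ S, lam i := by
    have h1 : ∑ i ∈ S, (g i + 1) ≤ ∑ i ∈ S, lam i := Finset.sum_le_sum C4
    rw [Finset.sum_add_distrib] at h1
    simp only [Finset.sum_const, smul_eq_mul, mul_one] at h1
    omega
  rw [C1] at hge
  rw [← C2] at hle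
  omega



lemma chain3 {a b c : Finset ℕ} (h1 : a ⊆ b) (h2 : b ⊆ c) :
    IsChainF ({a, b, c} : Finset (Finset ℕ)) := by
  intro X hX Y hY
  simp only [Finset.mem_insert, Finset.mem_singleton] at hX hY
  rcases hX with rfl | rfl | rfl <;> rcases hY with rfl | rfl | rfl <;>
    first
      | exact Or.inl subset_rfl
      | exact Or.inl h1
      | exact Or.inl h2
      | exact Or.inl (h1.trans h2)
      | exact Or.inr h1
      | exact Or.inr h2
      | exact Or.inr (h1.trans h2)

lemma skipless3 {a b c : Finset ℕ} {r : ℕ} (hr : 3 ≤ r) (h1 : a ⊆ b) (h2 : b ⊆ c)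
    (ca : a.card = r - 2) (cb : b.card = r - 1) (cc : c.card = r) :
    SkiplessChain ({a, b, c} : Finset (Finset ℕ)) := by
  refine ⟨chain3 h1 h2, ?_⟩
  intro X hX Y hY k hk1 hk2
  simp only [Finset.mem_insert, Finset.mem_singleton] at hX hY
  have hXc : X.card = r - 2 ∨ X.card = r - 1 ∨ X.card = r := by
    rcases hX with rfl | rfl | rfl <;> omega
  have hYc : Y.card = r - 2 ∨ Y.card = r - 1 ∨ Y.card = r := by
    rcases hY with rfl | rfl | rfl <;> omega
  have : k = r - 2 ∨ k = r - 1 ∨ k = r := by omega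
  rcases this with rfl | rfl | rfl
  · exact ⟨a, by simp, ca⟩
  · exact ⟨b, by simp, cb⟩
  · exact ⟨c, by simp, cc⟩

lemma disj3 {r : ℕ} (hr : 3 ≤ r) {a b c a' b' c' : Finset ℕ}
    (ha : a.card ≤ r - 2) (hb : b.card = r - 1) (hc : c.card = r)
    (ha' : a'.card ≤ r - 2) (hb' : b'.card = r - 1) (hc' : c'.card = r)
    (naa : a ≠ a') (nbb : b ≠ b') (ncc : c ≠ c') :
    Disjoint ({a, b, c} : Finset (Finset ℕ)) {a', b', c'} := by
  rw [Finset.disjoint_left]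
  intro x hx hx'
  simp only [Finset.mem_insert, Finset.mem_singleton] at hx hx'
  rcases hx with rfl | rfl | rfl <;> rcases hx' with h | h | h <;>
    first
      | exact naa h
      | exact nbb h
      | exact ncc h
      | (subst h; omega)


end Stmt8Aux

open Stmt8Aux in
/-- Rerouting lemma for the case of two layers apart. -/

theorem stmt8 (n r m : ℕ) (hr : 3 ≤ r) (hrn : r ≤ n) (hm : 1 ≤ m)
    (C : ℕ → Finset (Finset ℕ))
    (hCsub : ∀ i < m - 1, ∀ X ∈ C i, X ⊆ Finset.range n)
    (hCchain : ∀ i < m - 1, SkiplessChain (C i))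
    (hCdisj : ∀ i < m - 1, ∀ j < m - 1, i ≠ j → Disjoint (C i) (C j))
    (hClayers : ∀ i < m - 1, (∃ X ∈ C i, X.card = r - 2) ∧ (∃ X ∈ C i, X.card = r) ∧
      ∀ X ∈ C i, r - 2 ≤ X.card ∧ X.card ≤ r)
    (A B : Finset ℕ) (hBsub : B ⊆ Finset.range n) (hBcard : B.card = r)
    (hAB : A ⊆ B) (hAcard : A.card ≤ r - 2)
    (hAnot : ∀ i < m - 1, A ∉ C i) (hBnot : ∀ i < m - 1, B ∉ C i) :
    ∃ D : ℕ → Finset (Finset ℕ),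
      (∀ i < m, ∀ j < m, i ≠ j → Disjoint (D i) (D j)) ∧
      (∀ i < m, IsChainF (D i)) ∧
      (∀ i < m, ∀ X ∈ D i, X ⊆ Finset.range n) ∧
      (∀ i < m - 1, SkiplessChain (D i) ∧ (∃ X ∈ D i, X.card = r - 2) ∧
        (∃ X ∈ D i, X.card = r) ∧ ∀ X ∈ D i, r - 2 ≤ X.card ∧ X.card ≤ r) ∧
      (A ∈ D (m - 1) ∧ (∀ X ∈ D (m - 1), A ⊆ X) ∧
        (∃ X ∈ D (m - 1), X.card = r - 1) ∧ (∃ X ∈ D (m - 1), X.card = r)) ∧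
      (∀ X : Finset ℕ, ((∃ i < m - 1, X ∈ C i) ∨ X = A ∨ X = B) →
        ∃ i < m, X ∈ D i) := by
  classical
  set mm := m - 1 with hmm
  have hLex : ∀ i, ∃ X, i < mm → X ∈ C i ∧ X.card = r - 2 := by
    intro i
    by_cases h : i < mm
    · obtain ⟨X, hX, hc⟩ := (hClayers i h).1
      exact ⟨X, fun _ => ⟨hX, hc⟩⟩
    · exact ⟨∅, fun hc => absurd hc h⟩
  choose L hLs using hLex
  have hTex : ∀ i, ∃ X, i < mm → X ∈ C i ∧ X.card = r := by
    intro i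
    by_cases h : i < mm
    · obtain ⟨X, hX, hc⟩ := (hClayers i h).2.1
      exact ⟨X, fun _ => ⟨hX, hc⟩⟩
    · exact ⟨∅, fun hc => absurd hc h⟩
  choose T hTs using hTex
  have hMex : ∀ i, ∃ X, i < mm → X ∈ C i ∧ X.card = r - 1 := by
    intro i
    by_cases h : i < mm
    · obtain ⟨XL, hXL, hcL⟩ := (hClayers i h).1
      obtain ⟨XT, hXT, hcT⟩ := (hClayers i h).2.1
      obtain ⟨X, hX, hc⟩ := (hCchain i h).2 XL hXL XT hXT (r - 1) (by omega) (by omega)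
      exact ⟨X, fun _ => ⟨hX, hc⟩⟩
    · exact ⟨∅, fun hc => absurd hc h⟩
  choose M hMs using hMex
  have hLmem : ∀ i, i < mm → L i ∈ C i := fun i hi => (hLs i hi).1
  have hLcard : ∀ i, i < mm → (L i).card = r - 2 := fun i hi => (hLs i hi).2
  have hMmem : ∀ i, i < mm → M i ∈ C i := fun i hi => (hMs i hi).1
  have hMcard : ∀ i, i < mm → (M i).card = r - 1 := fun i hi => (hMs i hi).2
  have hTmem : ∀ i, i < mm → T i ∈ C i := fun i hi => (hTs i hi).1
  have hTcard : ∀ i, i < mm → (T i).card = r := fun i hi => (hTs i hi).2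
  have huniq : ∀ i, i < mm → ∀ X ∈ C i, ∀ Y ∈ C i, X.card = Y.card → X = Y := by
    intro i hi X hX Y hY hc
    rcases (hCchain i hi).1 X hX Y hY with h | h
    · exact Finset.eq_of_subset_of_card_le h (le_of_eq hc.symm)
    · exact (Finset.eq_of_subset_of_card_le h (le_of_eq hc)).symm
  have hLM : ∀ i, i < mm → L i ⊆ M i := by
    intro i hi
    rcases (hCchain i hi).1 (L i) (hLmem i hi) (M i) (hMmem i hi) with h | h
    · exact h
    · exfalso
      have := Finset.card_le_card h
      rw [hMcard i hi, hLcard i hi] at this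
      omega
  have hMT : ∀ i, i < mm → M i ⊆ T i := by
    intro i hi
    rcases (hCchain i hi).1 (M i) (hMmem i hi) (T i) (hTmem i hi) with h | h
    · exact h
    · exfalso
      have := Finset.card_le_card h
      rw [hMcard i hi, hTcard i hi] at this
      omega
  have hCel : ∀ i, i < mm → ∀ X ∈ C i, X = L i ∨ X = M i ∨ X = T i := by
    intro i hi X hX
    have hc := (hClayers i hi).2.2 X hX
    have hcc : X.card = r - 2 ∨ X.card = r - 1 ∨ X.card = r := by omega
    rcases hcc with h | h | h
    · exact Or.inl (huniq i hi X hX (L i) (hLmem i hi) (by rw [h, hLcard i hi]))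
    · exact Or.inr (Or.inl (huniq i hi X hX (M i) (hMmem i hi) (by rw [h, hMcard i hi])))
    · exact Or.inr (Or.inr (huniq i hi X hX (T i) (hTmem i hi) (by rw [h, hTcard i hi])))
  have hdiffmem : ∀ (f : ℕ → Finset ℕ), (∀ i, i < mm → f i ∈ C i) →
      ∀ k k', k < mm → k' < mm → f k = f k' → k = k' := by
    intro f hf k k' hk hk' he
    by_contra hne
    have hd := hCdisj k hk k' hk' hne
    exact (Finset.disjoint_left.1 hd (hf k hk)) (he ▸ hf k' hk')
  have hLinj := hdiffmem L hLmem
  have hMinj := hdiffmem M hMmem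
  have hTinj := hdiffmem T hTmem
  have hALne : ∀ i, i < mm → L i ≠ A := fun i hi hc => hAnot i hi (hc ▸ hLmem i hi)
  have hBTne : ∀ i, i < mm → T i ≠ B := fun i hi hc => hBnot i hi (hc ▸ hTmem i hi)
  have hmm_lt : mm < m := by omega
  obtain ⟨μ, hμc, hμM, ⟨l₀, hl₀, hμsub₀⟩, hacc⟩ :=
    escape_exists L M T A B r mm hr hLcard hMcard hTcard hLM hMT hLinj hMinj hTinj
      hALne hBTne hBcard hAB hAcard
  obtain ⟨l, hl, hltop, hlnd⟩ := wOK_nodup M T B mm _ hl₀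
  obtain ⟨X, hXdef⟩ : ∃ X, X = pTop T B l := ⟨_, rfl⟩
  have hμsub : μ ⊆ X := by rw [hXdef, hltop]; exact hμsub₀
  have hXor : X = B ∨ ∃ h, h < mm ∧ X = T h := by
    rw [hXdef]
    cases l with
    | nil => exact Or.inl rfl
    | cons a l' => exact Or.inr ⟨a, hl.1, rfl⟩
  have hXsub : X ⊆ Finset.range n := by
    rcases hXor with h | ⟨h, hh, he⟩
    · rw [h]; exact hBsub
    · rw [he]; exact hCsub h hh _ (hTmem h hh)
  have hXcard : X.card = r := by
    rcases hXor with h | ⟨h, hh, he⟩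
    · rw [h]; exact hBcard
    · rw [he]; exact hTcard h hh
  obtain ⟨τ, t1, t2, t3₀, t4, t5₀, t6, t7⟩ := tau_exists M T mm B hMT hTinj hBTne l hl hlnd
  have t3 : ∀ k, k < mm → τ k ≠ X := fun k hk => by rw [hXdef]; exact t3₀ k hk
  have t5 : ∀ Y, (Y = B ∨ ∃ h, h < mm ∧ Y = T h) → Y ≠ X → ∃ k, k < mm ∧ τ k = Y :=
    fun Y h1 h2 => t5₀ Y h1 (by rw [← hXdef]; exact h2)
  have hτcard : ∀ k, k < mm → (τ k).card = r := by
    intro k hk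
    rcases t2 k hk with h | ⟨h, hh, he⟩
    · rw [h]; exact hBcard
    · rw [he]; exact hTcard h hh
  have hτsub : ∀ k, k < mm → τ k ⊆ Finset.range n := by
    intro k hk
    rcases t2 k hk with h | ⟨h, hh, he⟩
    · rw [h]; exact hBsub
    · rw [he]; exact hCsub h hh _ (hTmem h hh)
  have hμrange : μ ⊆ Finset.range n := hμsub.trans hXsub
  have hArange : A ⊆ Finset.range n := hAB.trans hBsub
  have hLsub : ∀ i, i < mm → L i ⊆ Finset.range n := fun i hi => hCsub i hi _ (hLmem i hi)
  have hMsub : ∀ i, i < mm → M i ⊆ Finset.range n := fun i hi => hCsub i hi _ (hMmem i hi)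
  rcases hacc with hAμ | ⟨j, lb, hbot, hLjμ⟩
  · -- CASE 1 : A ⊆ μ, no bottom rotation needed
    obtain ⟨D, hD1, hD2⟩ : ∃ D : ℕ → Finset (Finset ℕ),
        D mm = {A, μ, X} ∧ ∀ k, k ≠ mm → D k = {L k, M k, τ k} := by
      refine ⟨fun k => if k = mm then {A, μ, X} else {L k, M k, τ k}, by simp, ?_⟩
      intro k hk
      simp [hk]
    refine ⟨D, ?_, ?_, ?_, ?_, ?_, ?_⟩
    · -- pairwise disjoint
      intro a ha b hb hab
      have hcase : ∀ k, k < m → k = mm ∨ (k ≠ mm ∧ k < mm) := by omega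
      rcases hcase a ha with ha' | ⟨ha1, ha2⟩ <;> rcases hcase b hb with hb' | ⟨hb1, hb2⟩
      · exact absurd (ha'.trans hb'.symm) hab
      · rw [ha', hD1, hD2 b hb1]
        exact disj3 hr hAcard hμc hXcard (le_of_eq (hLcard b hb2)) (hMcard b hb2)
          (hτcard b hb2) (fun hc => hALne b hb2 hc.symm) (fun hc => hμM b hb2 hc)
          (fun hc => t3 b hb2 hc.symm)
      · rw [hb', hD1, hD2 a ha1]
        exact (disj3 hr hAcard hμc hXcard (le_of_eq (hLcard a ha2)) (hMcard a ha2)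
          (hτcard a ha2) (fun hc => hALne a ha2 hc.symm) (fun hc => hμM a ha2 hc)
          (fun hc => t3 a ha2 hc.symm)).symm
      · rw [hD2 a ha1, hD2 b hb1]
        exact disj3 hr (le_of_eq (hLcard a ha2)) (hMcard a ha2) (hτcard a ha2)
          (le_of_eq (hLcard b hb2)) (hMcard b hb2) (hτcard b hb2)
          (fun hc => hab (hLinj a b ha2 hb2 hc)) (fun hc => hab (hMinj a b ha2 hb2 hc))
          (fun hc => hab (t4 a b ha2 hb2 hc))
    · -- chains
      intro i hi
      rcases (by omega : i = mm ∨ (i ≠ mm ∧ i < mm)) with hi' | ⟨h1, h2⟩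
      · rw [hi', hD1]; exact chain3 hAμ hμsub
      · rw [hD2 i h1]; exact chain3 (hLM i h2) (t1 i h2)
    · -- within range n
      intro i hi Y hY
      rcases (by omega : i = mm ∨ (i ≠ mm ∧ i < mm)) with hi' | ⟨h1, h2⟩
      · rw [hi', hD1] at hY
        simp only [Finset.mem_insert, Finset.mem_singleton] at hY
        rcases hY with rfl | rfl | rfl
        · exact hArange
        · exact hμrange
        · exact hXsub
      · rw [hD2 i h1] at hY
        simp only [Finset.mem_insert, Finset.mem_singleton] at hY
        rcases hY with rfl | rfl | rfl
        · exact hLsub i h2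
        · exact hMsub i h2
        · exact hτsub i h2
    · -- normal chains are skipless with the right layers
      intro i hi
      have h1 : i ≠ mm := by omega
      rw [hD2 i h1]
      refine ⟨skipless3 hr (hLM i hi) (t1 i hi) (hLcard i hi) (hMcard i hi) (hτcard i hi),
        ⟨L i, by simp, hLcard i hi⟩, ⟨τ i, by simp, hτcard i hi⟩, ?_⟩
      intro Y hY
      simp only [Finset.mem_insert, Finset.mem_singleton] at hY
      rcases hY with rfl | rfl | rfl
      · rw [hLcard i hi]; omega
      · rw [hMcard i hi]; omega
      · rw [hτcard i hi]; omega
    · -- the special chain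
      rw [hD1]
      refine ⟨by simp, ?_, ⟨μ, by simp, hμc⟩, ⟨X, by simp, hXcard⟩⟩
      intro Y hY
      simp only [Finset.mem_insert, Finset.mem_singleton] at hY
      rcases hY with rfl | rfl | rfl
      · exact subset_rfl
      · exact hAμ
      · exact hAμ.trans hμsub
    · -- covering
      intro Y hY
      rcases hY with ⟨i, hi, hYC⟩ | h | h
      · rcases hCel i hi Y hYC with h' | h' | h'
        · exact ⟨i, by omega, by rw [hD2 i (by omega), h']; simp⟩
        · exact ⟨i, by omega, by rw [hD2 i (by omega), h']; simp⟩
        · by_cases hTX : T i = X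
          · exact ⟨mm, hmm_lt, by rw [hD1, h', hTX]; simp⟩
          · obtain ⟨k, hk, hke⟩ := t5 (T i) (Or.inr ⟨i, hi, rfl⟩) hTX
            exact ⟨k, by omega, by rw [hD2 k (by omega), h', ← hke]; simp⟩
      · exact ⟨mm, hmm_lt, by rw [hD1, h]; simp⟩
      · by_cases hBX : B = X
        · exact ⟨mm, hmm_lt, by rw [hD1, h, hBX]; simp⟩
        · obtain ⟨k, hk, hke⟩ := t5 B (Or.inl rfl) hBX
          exact ⟨k, by omega, by rw [hD2 k (by omega), h, ← hke]; simp⟩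
  · -- CASE 2 : a bottom rotation is needed
    obtain ⟨lB, hlB, hlBtop, hlBnd⟩ := wOK_nodup M L A mm _ hbot
    have hjm : j < mm := hbot.1
    cases lB with
    | nil => exact absurd hlBtop.symm (hALne j hjm)
    | cons j₀ lb₀ =>
      have hj₀m : j₀ < mm := hlB.1
      have hLj₀ : L j₀ = L j := hlBtop
      have hLj₀μ : L j₀ ⊆ μ := by rw [hLj₀]; exact hLjμ
      obtain ⟨β, jb, b0, b1, b2, b3, b4, b5, b6, b7, b8, b9⟩ :=
        beta_exists M mm L A hLM hLinj hALne lb₀ j₀ hlB hlBnd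
      have hjbm : jb ≠ mm := by omega
      have hβcard : ∀ k, k < mm → k ≠ jb → (β k).card = r - 2 := by
        intro k hk hne
        obtain ⟨h, hh, he⟩ := b4 k hk hne
        rw [he]; exact hLcard h hh
      have hβcard' : ∀ k, k < mm → (β k).card ≤ r - 2 := by
        intro k hk
        rcases eq_or_ne k jb with rfl | hne
        · rw [b1]; exact hAcard
        · rw [hβcard k hk hne]
      have hβsub : ∀ k, k < mm → β k ⊆ Finset.range n := by
        intro k hk
        rcases eq_or_ne k jb with rfl | hne
        · rw [b1]; exact hArange
        · obtain ⟨h, hh, he⟩ := b4 k hk hne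
          rw [he]; exact hLsub h hh
      have hbAj : A ≠ L j₀ := fun hc => hALne j₀ hj₀m hc.symm
      have hbAβ : ∀ k, k < mm → k ≠ jb → A ≠ β k := by
        intro k hk hne hc
        exact hne.symm (b5 jb k b0 hk (by rw [b1, hc]))
      have hbjβ : ∀ k, k < mm → L j₀ ≠ β k := fun k hk hc => b6 k hk hc.symm
      obtain ⟨D, hD1, hD2, hD3⟩ : ∃ D : ℕ → Finset (Finset ℕ),
          D mm = {A, M jb, τ jb} ∧ D jb = {L j₀, μ, X} ∧
          ∀ k, k ≠ mm → k ≠ jb → D k = {β k, M k, τ k} := by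
        refine ⟨fun k => if k = mm then {A, M jb, τ jb}
          else if k = jb then {L j₀, μ, X} else {β k, M k, τ k}, by simp, ?_, ?_⟩
        · simp [hjbm]
        · intro k h1 h2
          simp [h1, h2]
      refine ⟨D, ?_, ?_, ?_, ?_, ?_, ?_⟩
      · -- pairwise disjoint
        intro a ha b hb hab
        have dSpecMu : Disjoint ({A, M jb, τ jb} : Finset (Finset ℕ)) {L j₀, μ, X} :=
          disj3 hr hAcard (hMcard jb b0) (hτcard jb b0)
            (le_of_eq (hLcard j₀ hj₀m)) hμc hXcard
            hbAj (hμM jb b0).symm (t3 jb b0)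
        have dSpecNor : ∀ k, k < mm → k ≠ jb →
            Disjoint ({A, M jb, τ jb} : Finset (Finset ℕ)) {β k, M k, τ k} := by
          intro k hk hne
          exact disj3 hr hAcard (hMcard jb b0) (hτcard jb b0)
            (hβcard' k hk) (hMcard k hk) (hτcard k hk)
            (hbAβ k hk hne) (fun hc => hne (hMinj jb k b0 hk hc).symm)
            (fun hc => hne (t4 jb k b0 hk hc).symm)
        have dMuNor : ∀ k, k < mm → k ≠ jb →
            Disjoint ({L j₀, μ, X} : Finset (Finset ℕ)) {β k, M k, τ k} := by
          intro k hk hne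
          exact disj3 hr (le_of_eq (hLcard j₀ hj₀m)) hμc hXcard
            (hβcard' k hk) (hMcard k hk) (hτcard k hk)
            (hbjβ k hk) (fun hc => hμM k hk hc) (fun hc => t3 k hk hc.symm)
        have hcase : ∀ k, k < m →
            k = mm ∨ (k ≠ mm ∧ k = jb) ∨ (k ≠ mm ∧ k ≠ jb ∧ k < mm) := by omega
        rcases hcase a ha with ha' | ⟨ha1, ha2⟩ | ⟨ha1, ha2, ha3⟩ <;>
          rcases hcase b hb with hb' | ⟨hb1, hb2⟩ | ⟨hb1, hb2, hb3⟩
        · exact absurd (ha'.trans hb'.symm) hab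
        · rw [ha', hD1, hb2, hD2]; exact dSpecMu
        · rw [ha', hD1, hD3 b hb1 hb2]; exact dSpecNor b hb3 hb2
        · rw [hb', hD1, ha2, hD2]; exact dSpecMu.symm
        · exact absurd (ha2.trans hb2.symm) hab
        · rw [ha2, hD2, hD3 b hb1 hb2]; exact dMuNor b hb3 hb2
        · rw [hb', hD1, hD3 a ha1 ha2]; exact (dSpecNor a ha3 ha2).symm
        · rw [hb2, hD2, hD3 a ha1 ha2]; exact (dMuNor a ha3 ha2).symm
        · rw [hD3 a ha1 ha2, hD3 b hb1 hb2]
          exact disj3 hr (hβcard' a ha3) (hMcard a ha3) (hτcard a ha3)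
            (hβcard' b hb3) (hMcard b hb3) (hτcard b hb3)
            (fun hc => hab (b5 a b ha3 hb3 hc)) (fun hc => hab (hMinj a b ha3 hb3 hc))
            (fun hc => hab (t4 a b ha3 hb3 hc))
      · -- chains
        intro i hi
        rcases (by omega : i = mm ∨ (i ≠ mm ∧ i = jb) ∨ (i ≠ mm ∧ i ≠ jb ∧ i < mm)) with
          hi' | ⟨h1, h2⟩ | ⟨h1, h2, h3⟩
        · rw [hi', hD1]; exact chain3 b2 (t1 jb b0)
        · rw [h2, hD2]; exact chain3 hLj₀μ hμsub
        · rw [hD3 i h1 h2]; exact chain3 (b3 i h3) (t1 i h3)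
      · -- within range n
        intro i hi Y hY
        rcases (by omega : i = mm ∨ (i ≠ mm ∧ i = jb) ∨ (i ≠ mm ∧ i ≠ jb ∧ i < mm)) with
          hi' | ⟨h1, h2⟩ | ⟨h1, h2, h3⟩
        · rw [hi', hD1] at hY
          simp only [Finset.mem_insert, Finset.mem_singleton] at hY
          rcases hY with rfl | rfl | rfl
          · exact hArange
          · exact hMsub jb b0
          · exact hτsub jb b0
        · rw [h2, hD2] at hY
          simp only [Finset.mem_insert, Finset.mem_singleton] at hY
          rcases hY with rfl | rfl | rfl
          · exact hLsub j₀ hj₀m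
          · exact hμrange
          · exact hXsub
        · rw [hD3 i h1 h2] at hY
          simp only [Finset.mem_insert, Finset.mem_singleton] at hY
          rcases hY with rfl | rfl | rfl
          · exact hβsub i h3
          · exact hMsub i h3
          · exact hτsub i h3
      · -- normal chains
        intro i hi
        have h1 : i ≠ mm := by omega
        rcases eq_or_ne i jb with rfl | h2
        · rw [hD2]
          refine ⟨skipless3 hr hLj₀μ hμsub (hLcard j₀ hj₀m) hμc hXcard,
            ⟨L j₀, by simp, hLcard j₀ hj₀m⟩, ⟨X, by simp, hXcard⟩, ?_⟩
          intro Y hY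
          simp only [Finset.mem_insert, Finset.mem_singleton] at hY
          rcases hY with rfl | rfl | rfl
          · rw [hLcard j₀ hj₀m]; omega
          · rw [hμc]; omega
          · rw [hXcard]; omega
        · rw [hD3 i h1 h2]
          refine ⟨skipless3 hr (b3 i hi) (t1 i hi) (hβcard i hi h2) (hMcard i hi)
              (hτcard i hi),
            ⟨β i, by simp, hβcard i hi h2⟩, ⟨τ i, by simp, hτcard i hi⟩, ?_⟩
          intro Y hY
          simp only [Finset.mem_insert, Finset.mem_singleton] at hY
          rcases hY with rfl | rfl | rfl
          · rw [hβcard i hi h2]; omega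
          · rw [hMcard i hi]; omega
          · rw [hτcard i hi]; omega
      · -- the special chain
        rw [hD1]
        refine ⟨by simp, ?_, ⟨M jb, by simp, hMcard jb b0⟩, ⟨τ jb, by simp, hτcard jb b0⟩⟩
        intro Y hY
        simp only [Finset.mem_insert, Finset.mem_singleton] at hY
        rcases hY with rfl | rfl | rfl
        · exact subset_rfl
        · exact b2
        · exact b2.trans (t1 jb b0)
      · -- covering
        intro Y hY
        rcases hY with ⟨i, hi, hYC⟩ | h | h
        · rcases hCel i hi Y hYC with h' | h' | h'
          · -- Y is a bottom
            rcases eq_or_ne i j₀ with rfl | hij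
            · exact ⟨jb, by omega, by rw [hD2, h']; simp⟩
            · obtain ⟨k, hk, hke⟩ := b7 i hi (fun hc => hij (hLinj i j₀ hi hj₀m
                (by rw [hc, hLj₀])))
              have hkjb : k ≠ jb := by
                intro hc; subst hc
                rw [b1] at hke
                exact hALne i hi hke.symm
              exact ⟨k, by omega, by rw [hD3 k (by omega) hkjb, h', ← hke]; simp⟩
          · -- Y is a mid
            rcases eq_or_ne i jb with rfl | hij
            · exact ⟨mm, hmm_lt, by rw [hD1, h']; simp⟩
            · exact ⟨i, by omega, by rw [hD3 i (by omega) hij, h']; simp⟩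
          · -- Y is a top
            by_cases hTX : T i = X
            · exact ⟨jb, by omega, by rw [hD2, h', hTX]; simp⟩
            · obtain ⟨k, hk, hke⟩ := t5 (T i) (Or.inr ⟨i, hi, rfl⟩) hTX
              rcases eq_or_ne k jb with rfl | hkjb
              · exact ⟨mm, hmm_lt, by rw [hD1, h', ← hke]; simp⟩
              · exact ⟨k, by omega, by rw [hD3 k (by omega) hkjb, h', ← hke]; simp⟩
        · exact ⟨mm, hmm_lt, by rw [hD1, h]; simp⟩
        · by_cases hBX : B = X
          · exact ⟨jb, by omega, by rw [hD2, h, hBX]; simp⟩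
          · obtain ⟨k, hk, hke⟩ := t5 B (Or.inl rfl) hBX
            rcases eq_or_ne k jb with rfl | hkjb
            · exact ⟨mm, hmm_lt, by rw [hD1, h, ← hke]; simp⟩
            · exact ⟨k, by omega, by rw [hD3 k (by omega) hkjb, h, ← hke]; simp⟩
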